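/- Let τ ≥ 1 and s, γ be reals with τ < s ≤ 2τ, let p be a natural number with p(s+1) ≤ γ < (p+1)(s+1), and set Δ = γ − p(s+1). Suppose γ ≥ 1, τ ≤ Δ ≤ s + s/τ − 1, and ℓ = p + (Δ+1)/(2τ+2). Then, with I = −2ℓτ + 2pτ − ps, II = −s(p+1), III = p − γ, IV = 2ℓ − γ − p − 1, and m = min{γ−p, (τ(γ−p+1)+ps)/(τ+1), s(p+1)}: II ≤ I, I = IV, III ≤ IV, m = (τ(γ−p+1)+ps)/(τ+1), and max{I, II} = max{III, IV} = −m. -/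
import Mathlib


/-- Bias–variance exponent balancing for a spectral algorithm with qualification `τ` in
the saturated regime `τ < s ≤ 2τ`, case `γ ≥ 1`, `τ ≤ Δ ≤ s + s/τ − 1`,
`ℓ = p + (Δ+1)/(2τ+2)`. -/
theorem exponent_balance_case2
    (τ s γ : ℝ) (p : ℕ) (hτ : 1 ≤ τ) (hτs : τ < s) (hs2τ : s ≤ 2 * τ)
    (hp1 : (p : ℝ) * (s + 1) ≤ γ) (hp2 : γ < ((p : ℝ) + 1) * (s + 1))
    (hγ : 1 ≤ γ)
    (Δ : ℝ) (hΔ : Δ = γ - (p : ℝ) * (s + 1)) (hΔ1 : τ ≤ Δ) (hΔ2 : Δ ≤ s + s / τ - 1)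
    (ℓ : ℝ) (hℓ : ℓ = (p : ℝ) + (Δ + 1) / (2 * τ + 2)) :
    let I := -2 * ℓ * τ + 2 * (p : ℝ) * τ - (p : ℝ) * s
    let II := -s * ((p : ℝ) + 1)
    let III := (p : ℝ) - γ
    let IV := 2 * ℓ - γ - (p : ℝ) - 1
    let m := min (γ - (p : ℝ))
      (min ((τ * (γ - (p : ℝ) + 1) + (p : ℝ) * s) / (τ + 1)) (s * ((p : ℝ) + 1)))
    II ≤ I ∧ I = IV ∧ III ≤ IV ∧
      m = (τ * (γ - (p : ℝ) + 1) + (p : ℝ) * s) / (τ + 1) ∧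
      max I II = -m ∧ max III IV = -m := by
  have hτ0 : (0:ℝ) < τ := by linarith
  have h1 : (0:ℝ) < τ + 1 := by linarith
  have h2 : (2 * τ + 2) ≠ 0 := by positivity
  have h1' : (τ + 1) ≠ 0 := by positivity
  -- clear the division in hΔ2 : τ * Δ ≤ s * τ + s - τ
  have hΔ2' : τ * Δ ≤ s * τ + s - τ := by
    have h := mul_le_mul_of_nonneg_left hΔ2 hτ0.le
    have : τ * (s / τ) = s := by field_simp
    nlinarith [h]
  subst hΔ hℓ
  intro I II III IV m
  set P := (p : ℝ)
  have hIdef : I = -(P * s) - τ * (γ - P * (s + 1) + 1) / (τ + 1) := by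
    show (-2 * (P + (γ - P * (s + 1) + 1) / (2 * τ + 2)) * τ + 2 * P * τ - P * s) = _
    field_simp
    ring
  have hIVdef : IV = I := by
    show (2 * (P + (γ - P * (s + 1) + 1) / (2 * τ + 2)) - γ - P - 1) = I
    rw [hIdef]
    field_simp
    ring
  have hM : (τ * (γ - P + 1) + P * s) / (τ + 1) = -I := by
    rw [hIdef]
    field_simp
    ring
  have hDle : τ * (γ - P * (s + 1) + 1) / (τ + 1) ≤ s := by
    rw [div_le_iff₀ h1]; nlinarith [hΔ2']
  have hDΔ : τ * (γ - P * (s + 1) + 1) / (τ + 1) ≤ γ - P * (s + 1) := by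
    rw [div_le_iff₀ h1]; nlinarith [hΔ1]
  have hII_I : II ≤ I := by
    rw [hIdef]; show -s * (P + 1) ≤ _; linarith [hDle]
  have hIII_IV : III ≤ IV := by
    rw [hIVdef, hIdef]; show P - γ ≤ _; linarith [hDΔ]
  have hMB : (τ * (γ - P + 1) + P * s) / (τ + 1) ≤ s * (P + 1) := by
    rw [hM, hIdef]; linarith [hDle]
  have hMA : (τ * (γ - P + 1) + P * s) / (τ + 1) ≤ γ - P := by
    rw [hM, hIdef]; linarith [hDΔ]
  have hm : m = (τ * (γ - P + 1) + P * s) / (τ + 1) := by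
    show min (γ - P) (min ((τ * (γ - P + 1) + P * s) / (τ + 1)) (s * (P + 1))) = _
    rw [min_eq_left hMB, min_eq_right hMA]
  refine ⟨hII_I, hIVdef.symm, hIII_IV, hm, ?_, ?_⟩
  · rw [max_eq_left hII_I, hm, hM, neg_neg]
  · rw [max_eq_right hIII_IV, hIVdef, hm, hM, neg_neg]
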